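/- Let G be a connected graph on N vertices each of whose edges is colored black or red, let G_+ (resp. G_−) denote the spanning subgraph on all N vertices consisting of the black (resp. red) edges, and let c(·) denote the number of connected components. Then for an integer k, G has a spanning tree containing exactly k red edges if and only if c(G_+) − 1 ≤ k ≤ N − c(G_−). -/

import Mathlib

open Finset
open scoped Classical

/-- The simple graph on `Fin N` whose edges are the (ordered) pairs in `T`. -/
def edgeGraph {N : ℕ} (T : Finset (Fin N × Fin N)) : SimpleGraph (Fin N) :=
  SimpleGraph.fromRel fun a b => (a, b) ∈ T

namespace STAux

open SimpleGraph

variable {V : Type*}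

lemma del_adj (G : SimpleGraph V) (u v x y : V) :
    (G \ fromEdgeSet {s(u,v)}).Adj x y ↔ G.Adj x y ∧ s(x,y) ≠ s(u,v) := by
  simp only [sdiff_adj, fromEdgeSet_adj, Set.mem_singleton_iff]
  constructor
  · rintro ⟨h1, h2⟩; exact ⟨h1, fun he => h2 ⟨he, h1.ne⟩⟩
  · rintro ⟨h1, h2⟩; exact ⟨h1, fun he => h2 he.1⟩

lemma walk_del {G : SimpleGraph V} (u v : V) {x w : V} (p : G.Walk x w) :
    (G \ fromEdgeSet {s(u,v)}).Reachable x w ∨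
      ((G \ fromEdgeSet {s(u,v)}).Reachable x u ∧ (G \ fromEdgeSet {s(u,v)}).Reachable v w) ∨
      ((G \ fromEdgeSet {s(u,v)}).Reachable x v ∧ (G \ fromEdgeSet {s(u,v)}).Reachable u w) := by
  induction p with
  | nil => exact Or.inl (Reachable.refl _)
  | @cons a b c ha q ih =>
    by_cases h0 : s(a, b) = s(u, v)
    · rcases Sym2.eq_iff.mp h0 with ⟨rfl, rfl⟩ | ⟨rfl, rfl⟩
      · rcases ih with h | ⟨h1, h2⟩ | ⟨h1, h2⟩
        · exact Or.inr (Or.inl ⟨Reachable.refl _, h⟩)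
        · exact Or.inr (Or.inl ⟨Reachable.refl _, h2⟩)
        · exact Or.inl h2
      · rcases ih with h | ⟨h1, h2⟩ | ⟨h1, h2⟩
        · exact Or.inr (Or.inr ⟨Reachable.refl _, h⟩)
        · exact Or.inl h2
        · exact Or.inr (Or.inr ⟨Reachable.refl _, h2⟩)
    · have ha' : (G \ fromEdgeSet {s(u,v)}).Adj a b := (del_adj G u v a b).mpr ⟨ha, h0⟩
      rcases ih with h | ⟨h1, h2⟩ | ⟨h1, h2⟩
      · exact Or.inl (ha'.reachable.trans h)
      · exact Or.inr (Or.inl ⟨ha'.reachable.trans h1, h2⟩)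
      · exact Or.inr (Or.inr ⟨ha'.reachable.trans h1, h2⟩)

lemma reachable_del_of_reachable {G : SimpleGraph V} {u v x w : V}
    (hr : (G \ fromEdgeSet {s(u,v)}).Reachable u v) (h : G.Reachable x w) :
    (G \ fromEdgeSet {s(u,v)}).Reachable x w := by
  obtain ⟨p⟩ := h
  rcases walk_del u v p with h | ⟨h1, h2⟩ | ⟨h1, h2⟩
  · exact h
  · exact (h1.trans hr).trans h2
  · exact (h1.trans hr.symm).trans h2

lemma path_del {G : SimpleGraph V} {u v x w : V} (p : G.Walk x w) (hp : p.IsPath)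
    (he : s(u,v) ∈ p.edges) :
    ((G \ fromEdgeSet {s(u,v)}).Reachable x u ∧ (G \ fromEdgeSet {s(u,v)}).Reachable v w) ∨
      ((G \ fromEdgeSet {s(u,v)}).Reachable x v ∧ (G \ fromEdgeSet {s(u,v)}).Reachable u w) := by
  induction p with
  | nil => simp at he
  | @cons a b c ha q ih =>
    rw [Walk.edges_cons, List.mem_cons] at he
    by_cases h0 : s(a, b) = s(u, v)
    · have hq : s(u, v) ∉ q.edges := by
        have hnd := hp.isTrail.edges_nodup
        rw [Walk.edges_cons] at hnd
        rw [← h0]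
        exact (List.nodup_cons.mp hnd).1
      have hqr : (G \ fromEdgeSet {s(u,v)}).Reachable b c := by
        refine (q.transfer _ (fun e heq => ?_)).reachable
        refine Sym2.ind (fun x' y' hm => ?_) e heq
        rw [mem_edgeSet, del_adj]
        exact ⟨q.adj_of_mem_edges hm, fun hh => hq (hh ▸ hm)⟩
      rcases Sym2.eq_iff.mp h0 with ⟨rfl, rfl⟩ | ⟨rfl, rfl⟩
      · exact Or.inl ⟨Reachable.refl _, hqr⟩
      · exact Or.inr ⟨Reachable.refl _, hqr⟩
    · have he' : s(u, v) ∈ q.edges := by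
        rcases he with h | h
        · exact absurd h.symm h0
        · exact h
      have ha' : (G \ fromEdgeSet {s(u,v)}).Adj a b := (del_adj G u v a b).mpr ⟨ha, h0⟩
      rcases ih hp.of_cons he' with ⟨h1, h2⟩ | ⟨h1, h2⟩
      · exact Or.inl ⟨ha'.reachable.trans h1, h2⟩
      · exact Or.inr ⟨ha'.reachable.trans h1, h2⟩

lemma cc_card_le [Finite V] {G H : SimpleGraph V} (h : G ≤ H) :
    Nat.card H.ConnectedComponent ≤ Nat.card G.ConnectedComponent :=
  Nat.card_le_card_of_surjective (ConnectedComponent.map (Hom.ofLE h))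
    (fun c => c.ind fun v => ⟨G.connectedComponentMk v, rfl⟩)

lemma cc_card_le_vertices [Finite V] (G : SimpleGraph V) :
    Nat.card G.ConnectedComponent ≤ Nat.card V :=
  Nat.card_le_card_of_surjective G.connectedComponentMk
    (fun c => c.ind fun v => ⟨v, rfl⟩)

lemma cc_card_pos [Finite V] [Nonempty V] (G : SimpleGraph V) :
    0 < Nat.card G.ConnectedComponent :=
  haveI : Nonempty G.ConnectedComponent :=
    ⟨G.connectedComponentMk (Classical.arbitrary V)⟩
  Nat.card_pos

lemma cc_card_bot [Finite V] :
    Nat.card ((⊥ : SimpleGraph V).ConnectedComponent) = Nat.card V := by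
  refine (Nat.card_eq_of_bijective (⊥ : SimpleGraph V).connectedComponentMk
    ⟨fun a b hab => ?_, fun c => c.ind fun v => ⟨v, rfl⟩⟩).symm
  exact reachable_bot.mp (ConnectedComponent.exact hab)

lemma cc_card_del_reachable [Finite V] (G : SimpleGraph V) {u v : V}
    (hr : (G \ fromEdgeSet {s(u,v)}).Reachable u v) :
    Nat.card (G \ fromEdgeSet {s(u,v)}).ConnectedComponent
      = Nat.card G.ConnectedComponent := by
  refine Nat.card_eq_of_bijective
    (ConnectedComponent.map (Hom.ofLE sdiff_le)) ⟨?_, ?_⟩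
  · refine ConnectedComponent.ind₂ (fun x y hxy => ?_)
    exact ConnectedComponent.sound
      (reachable_del_of_reachable hr (ConnectedComponent.exact hxy))
  · exact fun c => c.ind fun w => ⟨(G \ fromEdgeSet {s(u,v)}).connectedComponentMk w, rfl⟩

lemma cc_card_del_not_reachable [Finite V] (G : SimpleGraph V) {u v : V}
    (hadj : G.Adj u v) (hnr : ¬ (G \ fromEdgeSet {s(u,v)}).Reachable u v) :
    Nat.card (G \ fromEdgeSet {s(u,v)}).ConnectedComponent
      = Nat.card G.ConnectedComponent + 1 := by
  classical
  haveI : Fintype V := Fintype.ofFinite V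
  set G' := G \ fromEdgeSet {s(u,v)} with hG'
  haveI : Fintype G.ConnectedComponent := Fintype.ofFinite _
  haveI : Fintype G'.ConnectedComponent := Fintype.ofFinite _
  set φ : G'.ConnectedComponent → G.ConnectedComponent :=
    ConnectedComponent.map (Hom.ofLE sdiff_le) with hφ
  have hφmk : ∀ x : V, φ (G'.connectedComponentMk x) = G.connectedComponentMk x :=
    fun x => rfl
  set c₀ := G.connectedComponentMk u with hc₀
  -- fibers over c ≠ c₀ are singletons
  have fib1 : ∀ w : V, G.connectedComponentMk w ≠ c₀ →
      (univ.filter fun d => φ d = G.connectedComponentMk w)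
        = {G'.connectedComponentMk w} := by
    intro w hw
    ext d
    refine d.ind (fun x => ?_)
    simp only [mem_filter, mem_univ, true_and, mem_singleton, hφmk]
    rw [ConnectedComponent.eq, ConnectedComponent.eq]
    constructor
    · intro hxw
      rcases walk_del u v hxw.some with h | ⟨h1, h2⟩ | ⟨h1, h2⟩
      · exact h
      · exact absurd (ConnectedComponent.sound (hxw.symm.trans (h1.mono sdiff_le))) hw
      · exact absurd (ConnectedComponent.sound
          ((hxw.symm.trans (h1.mono sdiff_le)).trans hadj.symm.reachable)) hw
    · exact fun h => h.mono sdiff_le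
  -- fiber over c₀ is a doubleton
  have fib2 : (univ.filter fun d => φ d = c₀)
      = {G'.connectedComponentMk u, G'.connectedComponentMk v} := by
    ext d
    refine d.ind (fun x => ?_)
    simp only [mem_filter, mem_univ, true_and, mem_insert, mem_singleton, hφmk, hc₀]
    rw [ConnectedComponent.eq, ConnectedComponent.eq, ConnectedComponent.eq]
    constructor
    · intro hxu
      rcases walk_del u v hxu.some with h | ⟨h1, h2⟩ | ⟨h1, h2⟩
      · exact Or.inl h
      · exact Or.inl h1
      · exact Or.inr h1
    · rintro (h | h)
      · exact h.mono sdiff_le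
      · exact (h.mono sdiff_le).trans hadj.symm.reachable
  have fib2card : (univ.filter fun d => φ d = c₀).card = 2 := by
    rw [fib2]
    rw [Finset.card_insert_of_notMem, Finset.card_singleton]
    intro h
    rw [mem_singleton] at h
    exact hnr (ConnectedComponent.exact h)
  have fib1card : ∀ c : G.ConnectedComponent, c ≠ c₀ →
      (univ.filter fun d => φ d = c).card = 1 := by
    refine fun c => c.ind (fun w hw => ?_)
    rw [fib1 w hw, Finset.card_singleton]
  have hsum := Finset.card_eq_sum_card_fiberwise
    (f := φ) (s := univ) (t := univ) (fun x _ => mem_univ _)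
  rw [Finset.sum_eq_sum_sdiff_singleton_add (mem_univ c₀), fib2card] at hsum
  rw [Finset.sum_congr rfl (fun c hc => fib1card c (by
    rw [mem_sdiff, mem_singleton] at hc; exact hc.2))] at hsum
  rw [Finset.sum_const, smul_eq_mul, mul_one, Finset.card_sdiff_of_subset
    (Finset.singleton_subset_iff.mpr (mem_univ c₀)), Finset.card_singleton] at hsum
  have h1 : 1 ≤ (univ : Finset G.ConnectedComponent).card :=
    Finset.card_pos.mpr ⟨c₀, mem_univ c₀⟩
  rw [Nat.card_eq_fintype_card, Nat.card_eq_fintype_card]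
  simp only [Fintype.card, hsum]
  omega

variable {N : ℕ}

lemma eg_adj (F : Finset (Fin N × Fin N)) (a b : Fin N) :
    (edgeGraph F).Adj a b ↔ a ≠ b ∧ ((a, b) ∈ F ∨ (b, a) ∈ F) :=
  SimpleGraph.fromRel_adj _ a b

lemma eg_mono {F F' : Finset (Fin N × Fin N)} (h : F ⊆ F') :
    edgeGraph F ≤ edgeGraph F' := by
  intro a b hab
  rw [eg_adj] at hab ⊢
  exact ⟨hab.1, hab.2.imp (fun hm => h hm) (fun hm => h hm)⟩

lemma eg_bot : edgeGraph (∅ : Finset (Fin N × Fin N)) = ⊥ := by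
  ext a b
  simp [eg_adj]

lemma eg_erase {F : Finset (Fin N × Fin N)} (hord : ∀ p ∈ F, p.1 < p.2)
    {f : Fin N × Fin N} (hford : f.1 < f.2) :
    edgeGraph (F.erase f) = edgeGraph F \ fromEdgeSet {s(f.1, f.2)} := by
  ext a b
  rw [eg_adj, del_adj, eg_adj]
  constructor
  · rintro ⟨hne, h | h⟩ <;> rw [mem_erase] at h
    · refine ⟨⟨hne, Or.inl h.2⟩, fun hs => ?_⟩
      rcases Sym2.eq_iff.mp hs with ⟨rfl, rfl⟩ | ⟨rfl, rfl⟩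
      · exact h.1 (Prod.ext rfl rfl)
      · exact absurd (hord _ h.2) (not_lt.mpr (le_of_lt hford))
    · refine ⟨⟨hne, Or.inr h.2⟩, fun hs => ?_⟩
      rcases Sym2.eq_iff.mp hs with ⟨rfl, rfl⟩ | ⟨rfl, rfl⟩
      · exact absurd (hord _ h.2) (not_lt.mpr (le_of_lt hford))
      · exact h.1 (Prod.ext rfl rfl)
  · rintro ⟨⟨hne, h | h⟩, hs⟩
    · refine ⟨hne, Or.inl (mem_erase.mpr ⟨fun he => hs ?_, h⟩)⟩
      rw [← he]
    · refine ⟨hne, Or.inr (mem_erase.mpr ⟨fun he => hs ?_, h⟩)⟩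
      rw [← he]
      exact Sym2.eq_swap

lemma eg_acyclic_mono {F F' : Finset (Fin N × Fin N)} (h : F ⊆ F')
    (hac : (edgeGraph F').IsAcyclic) : (edgeGraph F).IsAcyclic := by
  intro v c hc
  exact hac (c.map (Hom.ofLE (eg_mono h)))
    (hc.map (fun a b hab => hab))

lemma eg_tree_card {F : Finset (Fin N × Fin N)} (hord : ∀ p ∈ F, p.1 < p.2)
    (htree : (edgeGraph F).IsTree) : F.card + 1 = N := by
  haveI : Fintype (edgeGraph F).edgeSet := Fintype.ofFinite _
  have h := htree.card_edgeFinset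
  rw [Fintype.card_fin] at h
  have hcard : F.card = (edgeGraph F).edgeFinset.card := by
    refine Finset.card_bij (fun p _ => s(p.1, p.2)) ?_ ?_ ?_
    · intro p hp
      rw [mem_edgeFinset, mem_edgeSet, eg_adj]
      exact ⟨ne_of_lt (hord p hp), Or.inl (by rwa [Prod.mk.eta])⟩
    · intro p hp q hq hpq
      rcases Sym2.eq_iff.mp hpq with ⟨h1, h2⟩ | ⟨h1, h2⟩
      · exact Prod.ext h1 h2
      · exact absurd (h1 ▸ h2 ▸ hord q hq) (not_lt.mpr (le_of_lt (hord p hp)))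
    · intro e he
      rw [mem_edgeFinset] at he
      revert he
      refine Sym2.ind (fun x y he => ?_) e
      rw [mem_edgeSet, eg_adj] at he
      rcases he.2 with h | h
      · exact ⟨(x, y), h, rfl⟩
      · exact ⟨(y, x), h, Sym2.eq_swap.symm⟩
  omega

lemma eg_forest_card (F : Finset (Fin N × Fin N)) (hord : ∀ p ∈ F, p.1 < p.2)
    (hac : (edgeGraph F).IsAcyclic) :
    Nat.card (edgeGraph F).ConnectedComponent + F.card = N := by
  induction F using Finset.induction_on with
  | empty => rw [eg_bot, cc_card_bot]; simp [Nat.card_eq_fintype_card]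
  | @insert f s hfs ih =>
    have hford : f.1 < f.2 := hord f (mem_insert_self f s)
    have hord' : ∀ p ∈ s, p.1 < p.2 := fun p hp => hord p (mem_insert_of_mem hp)
    have hadj : (edgeGraph (insert f s)).Adj f.1 f.2 := by
      rw [eg_adj]
      exact ⟨ne_of_lt hford, Or.inl (by rw [Prod.mk.eta]; exact mem_insert_self f s)⟩
    have hbr := (isAcyclic_iff_forall_adj_isBridge.mp hac) hadj
    have hG' : edgeGraph s = edgeGraph (insert f s) \ fromEdgeSet {s(f.1, f.2)} := by
      have h2 := eg_erase (F := insert f s) hord hford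
      rwa [Finset.erase_insert hfs] at h2
    have hdel := cc_card_del_not_reachable (edgeGraph (insert f s)) hadj
      (isBridge_iff.mp hbr)
    rw [← hG'] at hdel
    have ihs := ih hord' (eg_acyclic_mono (Finset.subset_insert f s) hac)
    rw [Finset.card_insert_of_notMem hfs]
    omega

lemma eg_card_ge (F : Finset (Fin N × Fin N)) (hord : ∀ p ∈ F, p.1 < p.2) :
    N ≤ Nat.card (edgeGraph F).ConnectedComponent + F.card := by
  induction F using Finset.induction_on with
  | empty => rw [eg_bot, cc_card_bot]; simp [Nat.card_eq_fintype_card]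
  | @insert f s hfs ih =>
    have hford : f.1 < f.2 := hord f (mem_insert_self f s)
    have hord' : ∀ p ∈ s, p.1 < p.2 := fun p hp => hord p (mem_insert_of_mem hp)
    have hadj : (edgeGraph (insert f s)).Adj f.1 f.2 := by
      rw [eg_adj]
      exact ⟨ne_of_lt hford, Or.inl (by rw [Prod.mk.eta]; exact mem_insert_self f s)⟩
    have hG' : edgeGraph s = edgeGraph (insert f s) \ fromEdgeSet {s(f.1, f.2)} := by
      have h2 := eg_erase (F := insert f s) hord hford
      rwa [Finset.erase_insert hfs] at h2
    have hle : Nat.card (edgeGraph s).ConnectedComponent ≤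
        Nat.card (edgeGraph (insert f s)).ConnectedComponent + 1 := by
      by_cases hr : (edgeGraph (insert f s) \ fromEdgeSet {s(f.1, f.2)}).Reachable f.1 f.2
      · rw [hG', cc_card_del_reachable _ hr]; omega
      · rw [hG', cc_card_del_not_reachable _ hadj hr]
    have ihs := ih hord'
    rw [Finset.card_insert_of_notMem hfs]
    omega

lemma eg_exists_tree : ∀ (n : ℕ) (F : Finset (Fin N × Fin N)), F.card = n →
    (∀ p ∈ F, p.1 < p.2) → (edgeGraph F).Connected →
    ∃ T ⊆ F, (edgeGraph T).IsTree := by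
  intro n
  induction n using Nat.strong_induction_on with
  | _ n ih =>
    intro F hcard hord hconn
    by_cases hac : (edgeGraph F).IsAcyclic
    · exact ⟨F, Finset.Subset.refl F, ⟨hconn, hac⟩⟩
    · rw [isAcyclic_iff_forall_adj_isBridge] at hac
      push_neg at hac
      obtain ⟨u, v, hadj, hnb⟩ := hac
      have hr : (edgeGraph F \ fromEdgeSet {s(u, v)}).Reachable u v := by
        by_contra h
        exact hnb (isBridge_iff.mpr h)
      obtain ⟨f, hfF, hfs⟩ : ∃ f ∈ F, s(f.1, f.2) = s(u, v) := by
        rcases ((eg_adj F u v).mp hadj).2 with h | h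
        · exact ⟨(u, v), h, rfl⟩
        · exact ⟨(v, u), h, Sym2.eq_swap⟩
      have hford : f.1 < f.2 := hord f hfF
      have herase : edgeGraph (F.erase f)
          = edgeGraph F \ fromEdgeSet {s(f.1, f.2)} :=
        eg_erase hord hford
      have hr' : (edgeGraph F \ fromEdgeSet {s(f.1, f.2)}).Reachable f.1 f.2 := by
        rw [hfs]
        rcases Sym2.eq_iff.mp hfs with ⟨h1, h2⟩ | ⟨h1, h2⟩
        · rw [h1, h2]; exact hr
        · rw [h1, h2]; exact hr.symm
      have hconn' : (edgeGraph (F.erase f)).Connected := by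
        rw [herase]
        have hpre : (edgeGraph F \ fromEdgeSet {s(f.1, f.2)}).Preconnected := by
          intro x y
          obtain ⟨p⟩ := hconn.preconnected x y
          rcases walk_del f.1 f.2 p with h | ⟨h1, h2⟩ | ⟨h1, h2⟩
          · exact h
          · exact (h1.trans hr').trans h2
          · exact (h1.trans hr'.symm).trans h2
        exact (connected_iff _).mpr ⟨hpre, ⟨u⟩⟩
      have hlt : (F.erase f).card < n := by
        rw [Finset.card_erase_of_mem hfF]
        have : 0 < F.card := Finset.card_pos.mpr ⟨f, hfF⟩
        omega
      obtain ⟨T, hT1, hT2⟩ := ih _ hlt (F.erase f) rfl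
        (fun p hp => hord p (Finset.mem_of_mem_erase hp)) hconn'
      exact ⟨T, hT1.trans (Finset.erase_subset f F), hT2⟩

lemma swap (E1 E2 T : Finset (Fin N × Fin N))
    (h1 : ∀ p ∈ E1, p.1 < p.2) (h2 : ∀ p ∈ E2, p.1 < p.2)
    (hd : Disjoint E1 E2) (hTsub : T ⊆ E1 ∪ E2)
    (htree : (edgeGraph T).IsTree)
    (hlt : Nat.card (edgeGraph E1).ConnectedComponent
      < Nat.card (edgeGraph (T ∩ E1)).ConnectedComponent) :
    ∃ T', T' ⊆ E1 ∪ E2 ∧ (edgeGraph T').IsTree ∧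
      (T' ∩ E1).card = (T ∩ E1).card + 1 ∧ (T' ∩ E2).card + 1 = (T ∩ E2).card := by
  classical
  have hordT : ∀ p ∈ T, p.1 < p.2 := fun p hp => by
    rcases Finset.mem_union.mp (hTsub hp) with h | h
    exacts [h1 p h, h2 p h]
  have hex1 : ∃ a b : Fin N, (a, b) ∈ E1 ∧ ¬ (edgeGraph (T ∩ E1)).Reachable a b := by
    by_contra hno
    push_neg at hno
    have key : ∀ x y : Fin N, (edgeGraph E1).Reachable x y →
        (edgeGraph (T ∩ E1)).Reachable x y := by
      intro x y hxy
      obtain ⟨p⟩ := hxy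
      induction p with
      | nil => exact Reachable.refl _
      | @cons a b c ha q ih =>
        refine Reachable.trans ?_ ih
        rcases ((eg_adj E1 a b).mp ha).2 with h | h
        · exact hno a b h
        · exact (hno b a h).symm
    have hinj : Function.Injective
        (ConnectedComponent.map
          (Hom.ofLE (eg_mono (Finset.inter_subset_right : T ∩ E1 ⊆ E1)))) := by
      refine ConnectedComponent.ind₂ (fun x y hxy => ?_)
      exact ConnectedComponent.sound (key x y (ConnectedComponent.exact hxy))
    exact absurd (Nat.card_le_card_of_injective _ hinj) (not_le.mpr hlt)
  obtain ⟨a, b, habE1, hnr⟩ := hex1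
  have hab : a < b := h1 (a, b) habE1
  have habne : a ≠ b := ne_of_lt hab
  have habT : (a, b) ∉ T := fun h => hnr
    ((eg_adj _ a b).mpr ⟨habne, Or.inl (Finset.mem_inter.mpr ⟨h, habE1⟩)⟩).reachable
  obtain ⟨w0⟩ := htree.isConnected.preconnected a b
  set pw := w0.toPath with hpw
  have hex2 : ∃ f ∈ T ∩ E2, s(f.1, f.2) ∈ (pw : (edgeGraph T).Walk a b).edges := by
    by_contra hno
    push_neg at hno
    refine hnr ((pw : (edgeGraph T).Walk a b).transfer (edgeGraph (T ∩ E1))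
      (fun e he => ?_)).reachable
    have heT := Walk.edges_subset_edgeSet _ he
    revert heT he
    refine Sym2.ind (fun x y he heT => ?_) e
    rw [mem_edgeSet] at heT ⊢
    rcases ((eg_adj T x y).mp heT).2 with h | h
    · rcases Finset.mem_union.mp (hTsub h) with hE | hE
      · exact (eg_adj _ x y).mpr ⟨((eg_adj T x y).mp heT).1,
          Or.inl (Finset.mem_inter.mpr ⟨h, hE⟩)⟩
      · exact absurd he (hno (x, y) (Finset.mem_inter.mpr ⟨h, hE⟩))
    · rcases Finset.mem_union.mp (hTsub h) with hE | hE
      · exact (eg_adj _ x y).mpr ⟨((eg_adj T x y).mp heT).1,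
          Or.inr (Finset.mem_inter.mpr ⟨h, hE⟩)⟩
      · refine absurd ?_ (hno (y, x) (Finset.mem_inter.mpr ⟨h, hE⟩))
        exact Sym2.eq_swap ▸ he
  obtain ⟨f, hfTE2, hfe⟩ := hex2
  have hfT : f ∈ T := (Finset.mem_inter.mp hfTE2).1
  have hfE2 : f ∈ E2 := (Finset.mem_inter.mp hfTE2).2
  have hford : f.1 < f.2 := h2 f hfE2
  have hfadj : (edgeGraph T).Adj f.1 f.2 :=
    (eg_adj _ _ _).mpr ⟨ne_of_lt hford, Or.inl (by rw [Prod.mk.eta]; exact hfT)⟩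
  have hbr : ¬ (edgeGraph T \ fromEdgeSet {s(f.1, f.2)}).Reachable f.1 f.2 :=
    (isBridge_iff.mp ((isAcyclic_iff_forall_adj_isBridge.mp htree.IsAcyclic) hfadj))
  have herase : edgeGraph (T.erase f) = edgeGraph T \ fromEdgeSet {s(f.1, f.2)} :=
    eg_erase hordT hford
  rw [← herase] at hbr
  have hcase := path_del (pw : (edgeGraph T).Walk a b) pw.isPath hfe
  rw [← herase] at hcase
  have hnr' : ¬ (edgeGraph (T.erase f)).Reachable a b := by
    intro hR
    rcases hcase with ⟨c1, c2⟩ | ⟨c1, c2⟩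
    · exact hbr ((c1.symm.trans hR).trans c2.symm)
    · exact hbr ((c2.trans hR.symm).trans c1)
  have hall : ∀ w : Fin N, (edgeGraph (T.erase f)).Reachable w a ∨
      (edgeGraph (T.erase f)).Reachable w b := by
    intro w
    obtain ⟨q⟩ := htree.isConnected.preconnected w a
    have hwd := walk_del f.1 f.2 q
    rw [← herase] at hwd
    rcases hcase with ⟨c1, c2⟩ | ⟨c1, c2⟩
    · rcases hwd with h | ⟨d1, d2⟩ | ⟨d1, d2⟩
      · exact Or.inl h
      · exact Or.inl (d1.trans c1.symm)
      · exact Or.inr (d1.trans c2)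
    · rcases hwd with h | ⟨d1, d2⟩ | ⟨d1, d2⟩
      · exact Or.inl h
      · exact Or.inr (d1.trans c2)
      · exact Or.inl (d1.trans c1.symm)
  set T' := insert (a, b) (T.erase f) with hT'
  have hT'sub : T' ⊆ E1 ∪ E2 := by
    intro q hq
    rcases Finset.mem_insert.mp hq with rfl | hq'
    · exact Finset.mem_union_left _ habE1
    · exact hTsub (Finset.mem_of_mem_erase hq')
  have hordT' : ∀ p ∈ T', p.1 < p.2 := fun q hq => by
    rcases Finset.mem_insert.mp hq with rfl | hq'
    · exact hab
    · exact hordT q (Finset.mem_of_mem_erase hq')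
  have hleT' : edgeGraph (T.erase f) ≤ edgeGraph T' :=
    eg_mono (Finset.subset_insert _ _)
  have hadj' : (edgeGraph T').Adj a b :=
    (eg_adj _ _ _).mpr ⟨habne, Or.inl (Finset.mem_insert_self _ _)⟩
  have hconn' : (edgeGraph T').Connected := by
    refine (connected_iff _).mpr ⟨?_, ⟨a⟩⟩
    intro x y
    have hr1 : (edgeGraph T').Reachable a b := hadj'.reachable
    rcases hall x with h | h <;> rcases hall y with h' | h'
    · exact (h.mono hleT').trans (h'.mono hleT').symm
    · exact ((h.mono hleT').trans hr1).trans (h'.mono hleT').symm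
    · exact ((h.mono hleT').trans hr1.symm).trans (h'.mono hleT').symm
    · exact (h.mono hleT').trans (h'.mono hleT').symm
  have hnT'ab : (a, b) ∉ T.erase f := fun h => habT (Finset.mem_of_mem_erase h)
  have heraseT' : T'.erase (a, b) = T.erase f := by
    rw [hT', Finset.erase_insert hnT'ab]
  have hacyc' : (edgeGraph T').IsAcyclic := by
    intro x c hc
    by_cases hmem : s(a, b) ∈ c.edges
    · have hbridge : (edgeGraph T').IsBridge s(a, b) := by
        rw [isBridge_iff]
        change ¬ (edgeGraph T' \ fromEdgeSet {s(a, b)}).Reachable a b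
        have hh : edgeGraph T' \ fromEdgeSet {s(a, b)}
            = edgeGraph (T.erase f) := by
          rw [← eg_erase hordT' (f := (a, b)) hab, heraseT']
        rw [hh]
        exact hnr'
      exact ((isBridge_iff_adj_and_forall_cycle_notMem hadj').mp hbridge) c hc hmem
    · have hed : ∀ e ∈ c.edges, e ∈ (edgeGraph (T.erase f)).edgeSet := by
        intro e he
        have heT' := Walk.edges_subset_edgeSet c he
        have hene : e ≠ s(a, b) := fun h => hmem (h ▸ he)
        revert heT' hene
        refine Sym2.ind (fun x' y' heT' hene => ?_) e
        rw [mem_edgeSet] at heT' ⊢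
        rw [eg_adj] at heT' ⊢
        refine ⟨heT'.1, ?_⟩
        rcases heT'.2 with h | h
        · rcases Finset.mem_insert.mp h with heq | h'
          · obtain ⟨rfl, rfl⟩ := Prod.mk.injEq .. ▸ Prod.ext_iff.mp heq
            exact absurd rfl hene
          · exact Or.inl h'
        · rcases Finset.mem_insert.mp h with heq | h'
          · obtain ⟨rfl, rfl⟩ := Prod.ext_iff.mp heq
            exact absurd Sym2.eq_swap hene
          · exact Or.inr h'
      exact htree.IsAcyclic _ ((hc.transfer hed).map
        (f := Hom.ofLE (eg_mono (Finset.erase_subset f T)))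
        (fun _ _ h => h))
  have hE2ab : (a, b) ∉ E2 := fun h => (Finset.disjoint_left.mp hd habE1) h
  have hinter2 : T' ∩ E2 = (T ∩ E2).erase f := by
    rw [hT', Finset.insert_inter_of_notMem hE2ab, Finset.erase_inter]
  have hfE1 : f ∉ E1 := fun h => (Finset.disjoint_left.mp hd h) hfE2
  have hinter1 : T' ∩ E1 = insert (a, b) (T ∩ E1) := by
    rw [hT', Finset.insert_inter_of_mem habE1, Finset.erase_inter,
      Finset.erase_eq_of_notMem (fun h => hfE1 (Finset.mem_inter.mp h).2)]
  refine ⟨T', hT'sub, ⟨hconn', hacyc'⟩, ?_, ?_⟩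
  · rw [hinter1, Finset.card_insert_of_notMem
      (fun h => habT (Finset.mem_inter.mp h).1)]
  · rw [hinter2, Finset.card_erase_add_one hfTE2]

lemma tree_bounds (Eb Er T : Finset (Fin N × Fin N))
    (hEb : ∀ p ∈ Eb, p.1 < p.2) (hEr : ∀ p ∈ Er, p.1 < p.2)
    (hsub : T ⊆ Eb ∪ Er) (hdisj2 : Disjoint (T ∩ Eb) (T ∩ Er))
    (htree : (edgeGraph T).IsTree) :
    Nat.card (edgeGraph Eb).ConnectedComponent + (T ∩ Eb).card ≤ N ∧
      Nat.card (edgeGraph Er).ConnectedComponent + (T ∩ Er).card ≤ N ∧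
      (T ∩ Eb).card + (T ∩ Er).card + 1 = N := by
  have hordT : ∀ p ∈ T, p.1 < p.2 := fun p hp => by
    rcases Finset.mem_union.mp (hsub hp) with h | h
    exacts [hEb p h, hEr p h]
  have hTcard := eg_tree_card hordT htree
  have hunion : (T ∩ Eb) ∪ (T ∩ Er) = T := by
    rw [← Finset.inter_union_distrib_left]
    exact Finset.inter_eq_left.mpr hsub
  have hcards : (T ∩ Eb).card + (T ∩ Er).card = T.card := by
    rw [← Finset.card_union_of_disjoint hdisj2, hunion]
  have hfcB := eg_forest_card (T ∩ Eb) (fun p hp => hEb p (Finset.mem_inter.mp hp).2)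
    (eg_acyclic_mono Finset.inter_subset_left htree.IsAcyclic)
  have hfcR := eg_forest_card (T ∩ Er) (fun p hp => hEr p (Finset.mem_inter.mp hp).2)
    (eg_acyclic_mono Finset.inter_subset_left htree.IsAcyclic)
  have hleB := cc_card_le (eg_mono (Finset.inter_subset_right : T ∩ Eb ⊆ Eb))
  have hleR := cc_card_le (eg_mono (Finset.inter_subset_right : T ∩ Er ⊆ Er))
  omega

end STAux

/-- Let `G` be a connected graph on `N` vertices whose edges are colored black
(`Eb`) or red (`Er`).  Then `G` has a spanning tree containing exactly `k` red
edges iff `c(G₊) − 1 ≤ k ≤ N − c(G₋)`, where `c(·)` counts connected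
components (isolated vertices included). -/
theorem spanning_tree_with_k_red_edges_iff
    {N : ℕ} (Eb Er : Finset (Fin N × Fin N))
    (hEb : ∀ p ∈ Eb, p.1 < p.2) (hEr : ∀ p ∈ Er, p.1 < p.2)
    (hdisj : Disjoint Eb Er)
    (hconn : (edgeGraph (Eb ∪ Er)).Connected) (k : ℕ) :
    (∃ T : Finset (Fin N × Fin N),
        T ⊆ Eb ∪ Er ∧ (edgeGraph T).IsTree ∧ (T ∩ Er).card = k) ↔
      (Nat.card (edgeGraph Eb).ConnectedComponent - 1 ≤ k ∧
        k ≤ N - Nat.card (edgeGraph Er).ConnectedComponent) := by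
  classical
  have hordU : ∀ p ∈ Eb ∪ Er, p.1 < p.2 := fun p hp => by
    rcases Finset.mem_union.mp hp with h | h
    exacts [hEb p h, hEr p h]
  haveI hne : Nonempty (Fin N) := hconn.nonempty
  have hccBN : Nat.card (edgeGraph Eb).ConnectedComponent ≤ N := by
    simpa using STAux.cc_card_le_vertices (edgeGraph Eb)
  have hccRN : Nat.card (edgeGraph Er).ConnectedComponent ≤ N := by
    simpa using STAux.cc_card_le_vertices (edgeGraph Er)
  have hccBpos := STAux.cc_card_pos (edgeGraph Eb)
  have hccRpos := STAux.cc_card_pos (edgeGraph Er)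
  have hdisj2 : ∀ T : Finset (Fin N × Fin N), Disjoint (T ∩ Eb) (T ∩ Er) :=
    fun T => hdisj.mono Finset.inter_subset_right Finset.inter_subset_right
  constructor
  · rintro ⟨T, hsub, htree, hk⟩
    obtain ⟨hB, hR, hS⟩ := STAux.tree_bounds Eb Er T hEb hEr hsub (hdisj2 T) htree
    omega
  · rintro ⟨hk1, hk2⟩
    obtain ⟨T0, hT0sub, hT0tree⟩ :=
      STAux.eg_exists_tree (Eb ∪ Er).card (Eb ∪ Er) rfl hordU hconn
    -- stepping down (removing red edges)
    have down : ∀ d : ℕ, ∀ T, T ⊆ Eb ∪ Er → (edgeGraph T).IsTree →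
        (T ∩ Er).card = k + d →
        ∃ T', T' ⊆ Eb ∪ Er ∧ (edgeGraph T').IsTree ∧ (T' ∩ Er).card = k := by
      intro d
      induction d with
      | zero => exact fun T hs ht hc => ⟨T, hs, ht, by omega⟩
      | succ d ih =>
        intro T hs ht hc
        obtain ⟨hB, hR, hS⟩ := STAux.tree_bounds Eb Er T hEb hEr hs (hdisj2 T) ht
        have hfcB := STAux.eg_forest_card (T ∩ Eb)
          (fun p hp => hEb p (Finset.mem_inter.mp hp).2)
          (STAux.eg_acyclic_mono Finset.inter_subset_left ht.IsAcyclic)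
        have hlt : Nat.card (edgeGraph Eb).ConnectedComponent
            < Nat.card (edgeGraph (T ∩ Eb)).ConnectedComponent := by omega
        obtain ⟨T', hT'1, hT'2, hT'3, hT'4⟩ :=
          STAux.swap Eb Er T hEb hEr hdisj hs ht hlt
        exact ih T' hT'1 hT'2 (by omega)
    -- stepping up (adding red edges)
    have up : ∀ d : ℕ, ∀ T, T ⊆ Eb ∪ Er → (edgeGraph T).IsTree →
        (T ∩ Er).card + d = k →
        ∃ T', T' ⊆ Eb ∪ Er ∧ (edgeGraph T').IsTree ∧ (T' ∩ Er).card = k := by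
      intro d
      induction d with
      | zero => exact fun T hs ht hc => ⟨T, hs, ht, by omega⟩
      | succ d ih =>
        intro T hs ht hc
        obtain ⟨hB, hR, hS⟩ := STAux.tree_bounds Eb Er T hEb hEr hs (hdisj2 T) ht
        have hfcR := STAux.eg_forest_card (T ∩ Er)
          (fun p hp => hEr p (Finset.mem_inter.mp hp).2)
          (STAux.eg_acyclic_mono Finset.inter_subset_left ht.IsAcyclic)
        have hlt : Nat.card (edgeGraph Er).ConnectedComponent
            < Nat.card (edgeGraph (T ∩ Er)).ConnectedComponent := by omega
        have hs' : T ⊆ Er ∪ Eb := by rwa [Finset.union_comm]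
        obtain ⟨T', hT'1, hT'2, hT'3, hT'4⟩ :=
          STAux.swap Er Eb T hEr hEb hdisj.symm hs' ht hlt
        have hT'1' : T' ⊆ Eb ∪ Er := by rwa [Finset.union_comm]
        exact ih T' hT'1' hT'2 (by omega)
    rcases le_or_gt (T0 ∩ Er).card k with h | h
    · exact up (k - (T0 ∩ Er).card) T0 hT0sub hT0tree (by omega)
    · exact down ((T0 ∩ Er).card - k) T0 hT0sub hT0tree (by omega)
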